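/- (Theorem 2, singleton Sobol' index) Let μ be a 2-additive capacity on N with Möbius transform m, and let f^Lo(z) = Σ_{i∈N} m(i) z_i + Σ_{{i,j} ⊆ N} m(i,j) min(z_i, z_j). For k ∈ N, the nonnormalized Sobol' index of {k}, namely Var[f^Lo_k] = ∫_0^1 (f^Lo_k(z_k))² dz_k, equals m(k)²/12 + m(k,·)²/45 + m(k)·m(k,·)/12, where m(k,·) = Σ_{i ∈ N \ {k}} m(k,i). -/

import Mathlib

open MeasureTheory Finset

/-- The uniform probability measure on the unit cube `[0,1]^n`. -/
noncomputable def unifCube (n : ℕ) : Measure (Fin n → ℝ) :=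
  Measure.pi fun _ => volume.restrict (Set.Icc 0 1)

/-- The Möbius transform of a set function. -/
noncomputable def mobius {n : ℕ} (ξ : Finset (Fin n) → ℝ) (S : Finset (Fin n)) : ℝ :=
  ∑ T ∈ S.powerset, (-1 : ℝ) ^ (S \ T).card * ξ T

/-- The Fourier transform of a set function. -/
noncomputable def fourierT {n : ℕ} (ξ : Finset (Fin n) → ℝ) (S : Finset (Fin n)) : ℝ :=
  (1 / 2 ^ n : ℝ) * ∑ T : Finset (Fin n), (-1 : ℝ) ^ (S ∩ T).card * ξ T

/-- The Banzhaf interaction transform of a set function. -/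
noncomputable def banzhaf {n : ℕ} (ξ : Finset (Fin n) → ℝ) (S : Finset (Fin n)) : ℝ :=
  (1 / 2 : ℝ) ^ (n - S.card) * ∑ K : Finset (Fin n), (-1 : ℝ) ^ (S \ K).card * ξ K

/-- The multilinear (Owen) extension associated with coefficients `m`. -/
noncomputable def fOw {n : ℕ} (m : Finset (Fin n) → ℝ) (x : Fin n → ℝ) : ℝ :=
  ∑ T : Finset (Fin n), m T * ∏ i ∈ T, x i

/-- A capacity: vanishes on the empty set and is monotone. -/
def Capacity {n : ℕ} (μ : Finset (Fin n) → ℝ) : Prop :=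
  μ ∅ = 0 ∧ ∀ S T : Finset (Fin n), S ⊆ T → μ S ≤ μ T

/-- The ANOVA component of `f` associated with the subset `S`. -/
noncomputable def anova {n : ℕ} (f : (Fin n → ℝ) → ℝ) (S : Finset (Fin n))
    (z : Fin n → ℝ) : ℝ :=
  ∑ T ∈ S.powerset, (-1 : ℝ) ^ (S \ T).card *
    ∫ y, f (fun i => if i ∈ T then z i else y i) ∂unifCube n

/-- The Choquet integral (Lovász extension) of a 2-additive capacity with
Möbius transform `m`. -/
noncomputable def fLo {n : ℕ} (m : Finset (Fin n) → ℝ) (z : Fin n → ℝ) : ℝ :=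
  ∑ i, m {i} * z i +
    ∑ i, ∑ j ∈ Finset.univ.filter (fun j => i < j), m {i, j} * min (z i) (z j)




instance : IsProbabilityMeasure ((volume : Measure ℝ).restrict (Set.Icc 0 1)) :=
  ⟨by simp⟩

instance (n : ℕ) : IsProbabilityMeasure (unifCube n) := by
  unfold unifCube; infer_instance

lemma map_eval (n : ℕ) (i : Fin n) :
    (unifCube n).map (fun x => x i) = (volume : Measure ℝ).restrict (Set.Icc 0 1) := by
  ext s hs
  rw [Measure.map_apply (measurable_pi_apply i) hs, unifCube,
    show (fun x : Fin n → ℝ => x i) ⁻¹' s = Function.eval i ⁻¹' s from rfl,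
    ← Set.univ_pi_update_univ, Measure.pi_pi,
    Finset.prod_eq_single i (fun l _ hl => by simp [Function.update_apply, hl]) (by simp)]
  simp

lemma map_pair (n : ℕ) (i j : Fin n) (hij : i ≠ j) :
    (unifCube n).map (fun x => (x i, x j)) =
      ((volume : Measure ℝ).restrict (Set.Icc 0 1)).prod
        ((volume : Measure ℝ).restrict (Set.Icc 0 1)) := by
  have hm : Measurable fun x : Fin n → ℝ => (x i, x j) :=
    (measurable_pi_apply i).prodMk (measurable_pi_apply j)
  refine (Measure.prod_eq fun s t hs ht => ?_).symm
  rw [Measure.map_apply hm (hs.prod ht)]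
  have hpre : (fun x : Fin n → ℝ => (x i, x j)) ⁻¹' (s ×ˢ t) =
      Set.pi Set.univ (Function.update (Function.update (fun _ => Set.univ) i s) j t) := by
    ext x
    simp only [Set.mem_preimage, Set.mem_prod, Set.mem_pi, Set.mem_univ, true_implies]
    constructor
    · rintro ⟨h1, h2⟩ l
      rcases eq_or_ne l j with rfl | hlj
      · simpa using h2
      · rcases eq_or_ne l i with rfl | hli
        · simpa [Function.update_apply, hij] using h1
        · simp [Function.update_apply, hlj, hli]
    · intro h
      have h1 := h i
      have h2 := h j
      simp [Function.update_apply, hij] at h1 h2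
      exact ⟨h1, h2⟩
  rw [unifCube, hpre, Measure.pi_pi,
    ← Finset.prod_subset (Finset.subset_univ ({i, j} : Finset (Fin n)))
      (fun l _ hl => by
        simp only [Finset.mem_insert, Finset.mem_singleton, not_or] at hl
        simp [Function.update_apply, hl.1, hl.2]),
    Finset.prod_pair hij]
  simp [Function.update_apply, hij]







lemma ae_mem_cube (n : ℕ) : ∀ᵐ x ∂unifCube n, ∀ i, x i ∈ Set.Icc (0:ℝ) 1 := by
  have hmeas : MeasurableSet (Set.pi Set.univ fun _ : Fin n => Set.Icc (0:ℝ) 1) :=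
    MeasurableSet.univ_pi fun _ => measurableSet_Icc
  have hfull : unifCube n (Set.pi Set.univ fun _ : Fin n => Set.Icc (0:ℝ) 1) = 1 := by
    rw [unifCube, Measure.pi_pi]
    simp
  have : unifCube n (Set.pi Set.univ fun _ : Fin n => Set.Icc (0:ℝ) 1)ᶜ = 0 := by
    rw [measure_compl hmeas (measure_ne_top _ _), hfull, measure_univ, tsub_self]
  filter_upwards [measure_eq_zero_iff_ae_notMem.mp this] with x hx
  intro i
  by_contra hne
  exact hx (fun hmem => hne (hmem i (Set.mem_univ i)))

lemma integrable_cube {n : ℕ} {f : (Fin n → ℝ) → ℝ} (hm : Measurable f) (C : ℝ)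
    (hb : ∀ x : Fin n → ℝ, (∀ i, x i ∈ Set.Icc (0:ℝ) 1) → ‖f x‖ ≤ C) :
    Integrable f (unifCube n) := by
  refine (integrable_const C).mono' hm.aestronglyMeasurable ?_
  filter_upwards [ae_mem_cube n] with x hx using hb x hx

lemma int_id_nu : ∫ y, y ∂((volume : Measure ℝ).restrict (Set.Icc 0 1)) = 1/2 := by
  rw [show ∫ y, y ∂((volume : Measure ℝ).restrict (Set.Icc 0 1))
      = ∫ y in Set.Icc (0:ℝ) 1, y from rfl, integral_Icc_eq_integral_Ioc,
    ← intervalIntegral.integral_of_le (by norm_num : (0:ℝ) ≤ 1)]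
  simp

lemma int_min_nu {t : ℝ} (ht : t ∈ Set.Icc (0:ℝ) 1) :
    ∫ y, min t y ∂((volume : Measure ℝ).restrict (Set.Icc 0 1)) = t - t^2/2 := by
  obtain ⟨ht0, ht1⟩ := ht
  have hc : Continuous fun y : ℝ => min t y := by fun_prop
  rw [show ∫ y, min t y ∂((volume : Measure ℝ).restrict (Set.Icc 0 1))
      = ∫ y in Set.Icc (0:ℝ) 1, min t y from rfl, integral_Icc_eq_integral_Ioc,
    ← intervalIntegral.integral_of_le (by norm_num : (0:ℝ) ≤ 1),
    ← intervalIntegral.integral_add_adjacent_intervals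
      (a := 0) (b := t) (c := 1)
      (hc.intervalIntegrable 0 t) (hc.intervalIntegrable t 1)]
  have h1 : ∫ y in (0:ℝ)..t, min t y = t^2/2 := by
    rw [intervalIntegral.integral_congr (g := fun y => y)
      (fun y hy => by
        rw [Set.uIcc_of_le ht0] at hy
        exact min_eq_right hy.2)]
    simp
  have h2 : ∫ y in t..(1:ℝ), min t y = t * (1 - t) := by
    rw [intervalIntegral.integral_congr (g := fun _ => t)
      (fun y hy => by
        rw [Set.uIcc_of_le ht1] at hy
        exact min_eq_left hy.1)]
    simp [mul_comm]
  rw [h1, h2]; ring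


lemma int_coord (n : ℕ) (i : Fin n) : ∫ x, x i ∂unifCube n = 1/2 := by
  rw [← int_id_nu, ← map_eval n i]
  exact (integral_map (μ := unifCube n) (φ := fun x => x i) (f := fun y : ℝ => y) (measurable_pi_apply i).aemeasurable
    (by fun_prop : Measurable fun y : ℝ => y).aestronglyMeasurable).symm

lemma int_min_const (n : ℕ) (i : Fin n) {t : ℝ} (ht : t ∈ Set.Icc (0:ℝ) 1) :
    ∫ x, min t (x i) ∂unifCube n = t - t^2/2 := by
  rw [← int_min_nu ht, ← map_eval n i]
  exact (integral_map (μ := unifCube n) (φ := fun x => x i) (f := fun y : ℝ => min t y) (measurable_pi_apply i).aemeasurable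
    (by fun_prop : Measurable fun y : ℝ => min t y).aestronglyMeasurable).symm

lemma int_min_pair (n : ℕ) (i j : Fin n) (hij : i ≠ j) :
    ∫ x, min (x i) (x j) ∂unifCube n = 1/3 := by
  have hm : Measurable fun x : Fin n → ℝ => (x i, x j) :=
    (measurable_pi_apply i).prodMk (measurable_pi_apply j)
  have hgm : Measurable fun p : ℝ × ℝ => min p.1 p.2 := by fun_prop
  have key : ∫ x, min (x i) (x j) ∂unifCube n
      = ∫ p, min p.1 p.2 ∂(((volume : Measure ℝ).restrict (Set.Icc 0 1)).prod
          ((volume : Measure ℝ).restrict (Set.Icc 0 1))) := by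
    rw [← map_pair n i j hij, integral_map hm.aemeasurable hgm.aestronglyMeasurable]
  rw [key]
  have hprod : (((volume : Measure ℝ).restrict (Set.Icc 0 1)).prod
      ((volume : Measure ℝ).restrict (Set.Icc 0 1)))
      = ((volume : Measure ℝ).prod volume).restrict ((Set.Icc 0 1) ×ˢ (Set.Icc 0 1)) :=
    Measure.prod_restrict _ _
  have hint : Integrable (fun p : ℝ × ℝ => min p.1 p.2)
      (((volume : Measure ℝ).restrict (Set.Icc 0 1)).prod
        ((volume : Measure ℝ).restrict (Set.Icc 0 1))) := by
    refine (integrable_const (1:ℝ)).mono' hgm.aestronglyMeasurable ?_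
    rw [hprod]
    filter_upwards [ae_restrict_mem (measurableSet_Icc.prod measurableSet_Icc)] with p hp
    obtain ⟨⟨h1, h2⟩, ⟨h3, h4⟩⟩ := hp
    rw [Real.norm_eq_abs, abs_le]
    constructor
    · linarith [le_min h1 h3]
    · linarith [min_le_left p.1 p.2]
  rw [integral_prod _ hint,
    integral_congr_ae (g := fun a : ℝ => a - a^2/2)
      (by filter_upwards [ae_restrict_mem measurableSet_Icc] with a ha using int_min_nu ha)]
  rw [show ∫ a, (a - a^2/2) ∂((volume : Measure ℝ).restrict (Set.Icc 0 1))
      = ∫ a in Set.Icc (0:ℝ) 1, (a - a^2/2) from rfl, integral_Icc_eq_integral_Ioc,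
    ← intervalIntegral.integral_of_le (by norm_num : (0:ℝ) ≤ 1),
    intervalIntegral.integral_sub (Continuous.intervalIntegrable (by fun_prop) _ _)
      (Continuous.intervalIntegrable (by fun_prop) _ _)]
  simp [intervalIntegral.integral_div]
  norm_num

lemma habs : ∀ (c v : ℝ), v ∈ Set.Icc (0:ℝ) 1 → ‖c * v‖ ≤ |c| := fun c v hv => by
  rw [norm_mul, Real.norm_eq_abs, Real.norm_eq_abs]
  exact mul_le_of_le_one_right (abs_nonneg c) (abs_le.mpr ⟨by linarith [hv.1], hv.2⟩)

lemma hmem_min {v w : ℝ} (hv : v ∈ Set.Icc (0:ℝ) 1) (hw : w ∈ Set.Icc (0:ℝ) 1) :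
    min v w ∈ Set.Icc (0:ℝ) 1 :=
  ⟨le_min hv.1 hw.1, (min_le_left _ _).trans hv.2⟩

lemma hcomb {n : ℕ} (m : Finset (Fin n) → ℝ) (k : Fin n) :
    ∑ i, ∑ j ∈ Finset.univ.filter (fun j => i < j),
      (if i = k ∨ j = k then m {i, j} else 0)
      = ∑ i ∈ Finset.univ \ {k}, m {k, i} := by
  rw [Finset.sdiff_singleton_eq_erase,
    ← Finset.add_sum_erase _ _ (Finset.mem_univ k)]
  have hGk : ∑ j ∈ Finset.univ.filter (fun j => k < j),
      (if k = k ∨ j = k then m {k, j} else 0)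
      = ∑ j ∈ Finset.univ.filter (fun j => k < j), m {k, j} :=
    Finset.sum_congr rfl fun j _ => by simp
  have hGi : ∀ i, i ≠ k → ∑ j ∈ Finset.univ.filter (fun j => i < j),
      (if i = k ∨ j = k then m {i, j} else 0)
      = if i < k then m {k, i} else 0 := by
    intro i hik
    rw [Finset.sum_congr rfl (fun j _ =>
      show (if i = k ∨ j = k then m {i, j} else 0) = if j = k then m {i, j} else 0 by
        simp [hik])]
    rw [Finset.sum_ite_eq' _ k (fun j => m {i, j})]
    simp [Finset.pair_comm i k]
  rw [hGk, Finset.sum_congr rfl (fun i hi => hGi i (Finset.ne_of_mem_erase hi))]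
  have herase : ∑ i ∈ Finset.univ.erase k, (if i < k then m {k, i} else 0)
      = ∑ i ∈ Finset.univ.filter (fun i => i < k), m {k, i} := by
    rw [Finset.sum_erase _ (by simp), ← Finset.sum_filter]
  rw [herase]
  have hsplit : ∑ i ∈ Finset.univ.erase k, m {k, i}
      = ∑ i ∈ Finset.univ.filter (fun i => i < k), m {k, i}
        + ∑ i ∈ Finset.univ.filter (fun j => k < j), m {k, i} := by
    rw [← Finset.sum_filter_add_sum_filter_not (Finset.univ.erase k) (fun i => i < k)]
    congr 1
    · congr 1
      ext i
      simp only [Finset.mem_filter, Finset.mem_erase, Finset.mem_univ, true_and, and_true]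
      exact ⟨fun h => h.2, fun h => ⟨ne_of_lt h, h⟩⟩
    · congr 1
      ext i
      simp only [Finset.mem_filter, Finset.mem_erase, Finset.mem_univ, true_and, and_true]
      constructor
      · rintro ⟨hne, hnlt⟩
        exact (hne.lt_or_gt).resolve_left hnlt
      · intro h
        exact ⟨(ne_of_lt h).symm, not_lt_of_gt h⟩
  rw [hsplit]
  ring

lemma anova_eval {n : ℕ} (m : Finset (Fin n) → ℝ) (k : Fin n) {t : ℝ}
    (ht : t ∈ Set.Icc (0:ℝ) 1) :
    anova (fLo m) {k} (fun _ => t) =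
      m {k} * (t - 1/2) +
        (∑ i ∈ Finset.univ \ {k}, m {k, i}) * (t - t^2/2 - 1/3) := by
  classical
  -- integrability facts
  have hIs : ∀ i : Fin n, Integrable (fun y : Fin n → ℝ => m {i} * y i) (unifCube n) :=
    fun i => integrable_cube ((measurable_pi_apply i).const_mul _) |m {i}|
      (fun x hx => habs _ _ (hx i))
  have hIm : ∀ i j : Fin n,
      Integrable (fun y : Fin n → ℝ => m {i, j} * min (y i) (y j)) (unifCube n) :=
    fun i j => integrable_cube
      (((measurable_pi_apply i).min (measurable_pi_apply j)).const_mul _) |m {i, j}|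
      (fun x hx => habs _ _ (hmem_min (hx i) (hx j)))
  have hIs' : ∀ i : Fin n,
      Integrable (fun y : Fin n → ℝ => m {i} * (if i = k then t else y i)) (unifCube n) := by
    intro i
    by_cases h : i = k
    · simpa [h] using integrable_const (μ := unifCube n) (m {k} * t)
    · simpa [h] using hIs i
  have hIm' : ∀ i j : Fin n,
      Integrable (fun y : Fin n → ℝ =>
        m {i, j} * min (if i = k then t else y i) (if j = k then t else y j))
        (unifCube n) := by
    intro i j
    by_cases hik : i = k
    · by_cases hjk : j = k
      · simpa [hik, hjk] using integrable_const (μ := unifCube n) (m {k, k} * min t t)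
      · simp only [hik, if_pos rfl, if_neg hjk]
        exact integrable_cube
          ((measurable_const.min (measurable_pi_apply j)).const_mul _) |m {k, j}|
          (fun x hx => habs _ _ (hmem_min ht (hx j)))
    · by_cases hjk : j = k
      · simp only [if_neg hik, hjk, if_pos rfl]
        exact integrable_cube
          (((measurable_pi_apply i).min measurable_const).const_mul _) |m {i, k}|
          (fun x hx => habs _ _ (hmem_min (hx i) ht))
      · simpa [hik, hjk] using hIm i j
  -- the two integrals
  have hI1 : ∫ y, fLo m y ∂unifCube n
      = (∑ i, m {i} * (1/2 : ℝ))
        + ∑ i, ∑ j ∈ Finset.univ.filter (fun j => i < j), m {i, j} * (1/3 : ℝ) := by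
    rw [show (fun y : Fin n → ℝ => fLo m y) = fun y =>
        (∑ i, m {i} * y i) + ∑ i, ∑ j ∈ Finset.univ.filter (fun j => i < j),
          m {i, j} * min (y i) (y j) from rfl]
    rw [integral_add (integrable_finset_sum _ fun i _ => hIs i)
      (integrable_finset_sum _ fun i _ => integrable_finset_sum _ fun j _ => hIm i j),
      integral_finset_sum _ (fun i _ => hIs i),
      integral_finset_sum _ (fun i _ => integrable_finset_sum _ fun j _ => hIm i j)]
    congr 1
    · exact Finset.sum_congr rfl fun i _ => by rw [integral_const_mul _ _, int_coord]
    · refine Finset.sum_congr rfl fun i _ => ?_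
      rw [integral_finset_sum _ (fun j _ => hIm i j)]
      refine Finset.sum_congr rfl fun j hj => ?_
      have hij : i < j := (Finset.mem_filter.mp hj).2
      rw [integral_const_mul _ _, int_min_pair n i j (ne_of_lt hij)]
  have hI2 : ∫ y, fLo m (fun i => if i = k then t else y i) ∂unifCube n
      = (∑ i, m {i} * (if i = k then t else (1/2 : ℝ)))
        + ∑ i, ∑ j ∈ Finset.univ.filter (fun j => i < j),
            m {i, j} * (if i = k ∨ j = k then t - t^2/2 else (1/3 : ℝ)) := by
    rw [show (fun y : Fin n → ℝ => fLo m (fun i => if i = k then t else y i)) = fun y =>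
        (∑ i, m {i} * (if i = k then t else y i))
          + ∑ i, ∑ j ∈ Finset.univ.filter (fun j => i < j),
              m {i, j} * min (if i = k then t else y i) (if j = k then t else y j) from rfl]
    rw [integral_add (integrable_finset_sum _ fun i _ => hIs' i)
      (integrable_finset_sum _ fun i _ => integrable_finset_sum _ fun j _ => hIm' i j),
      integral_finset_sum _ (fun i _ => hIs' i),
      integral_finset_sum _ (fun i _ => integrable_finset_sum _ fun j _ => hIm' i j)]
    congr 1
    · refine Finset.sum_congr rfl fun i _ => ?_
      by_cases h : i = k
      · simp [h]
      · simp only [h, if_false]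
        rw [integral_const_mul _ _, int_coord]
    · refine Finset.sum_congr rfl fun i _ => ?_
      rw [integral_finset_sum _ (fun j _ => hIm' i j)]
      refine Finset.sum_congr rfl fun j hj => ?_
      have hij : i < j := (Finset.mem_filter.mp hj).2
      by_cases hik : i = k
      · have hjk : j ≠ k := by rintro rfl; exact absurd hik (ne_of_lt hij)
        simp only [hik, if_pos rfl, if_neg hjk, true_or, if_true]
        rw [integral_const_mul _ _, int_min_const n j ht]
      · by_cases hjk : j = k
        · simp only [if_neg hik, hjk, if_pos rfl, or_true, if_true]
          have : (fun y : Fin n → ℝ => m {i, k} * min (y i) t)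
              = fun y => m {i, k} * min t (y i) := by
            funext y; rw [min_comm]
          rw [this, integral_const_mul _ _, int_min_const n i ht]
        · simp only [if_neg hik, if_neg hjk, if_neg (not_or.mpr ⟨hik, hjk⟩)]
          rw [integral_const_mul _ _, int_min_pair n i j (ne_of_lt hij)]
  -- expand anova
  have hps : ({k} : Finset (Fin n)).powerset = {∅, {k}} := by
    ext S
    simp [Finset.subset_singleton_iff]
  rw [anova, hps, Finset.sum_insert (Finset.notMem_singleton.mpr (Ne.symm (Finset.singleton_ne_empty k))), Finset.sum_singleton]
  simp only [Finset.sdiff_empty, Finset.card_singleton, pow_one, Finset.sdiff_self,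
    Finset.card_empty, pow_zero, one_mul, Finset.notMem_empty, if_false,
    Finset.mem_singleton]
  rw [hI1, hI2]
  -- algebra
  have hs1 : (∑ i, m {i} * (if i = k then t else (1/2 : ℝ))) - ∑ i, m {i} * (1/2 : ℝ)
      = m {k} * (t - 1/2) := by
    rw [← Finset.sum_sub_distrib,
      Finset.sum_congr rfl (fun i (_ : i ∈ Finset.univ) =>
        show m {i} * (if i = k then t else (1/2:ℝ)) - m {i} * (1/2:ℝ)
          = if i = k then m {k} * (t - 1/2) else 0 by
        by_cases h : i = k
        · simp [h]; ring
        · simp [h]),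
      Finset.sum_ite_eq' _ k (fun _ => m {k} * (t - 1/2))]
    simp
  have hs2 : (∑ i, ∑ j ∈ Finset.univ.filter (fun j => i < j),
        m {i, j} * (if i = k ∨ j = k then t - t^2/2 else (1/3 : ℝ)))
      - ∑ i, ∑ j ∈ Finset.univ.filter (fun j => i < j), m {i, j} * (1/3 : ℝ)
      = (∑ i ∈ Finset.univ \ {k}, m {k, i}) * (t - t^2/2 - 1/3) := by
    rw [← Finset.sum_sub_distrib]
    have : ∀ i : Fin n, (∑ j ∈ Finset.univ.filter (fun j => i < j),
          m {i, j} * (if i = k ∨ j = k then t - t^2/2 else (1/3 : ℝ)))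
        - ∑ j ∈ Finset.univ.filter (fun j => i < j), m {i, j} * (1/3 : ℝ)
        = ∑ j ∈ Finset.univ.filter (fun j => i < j),
            (if i = k ∨ j = k then m {i, j} else 0) * (t - t^2/2 - 1/3) := by
      intro i
      rw [← Finset.sum_sub_distrib]
      refine Finset.sum_congr rfl fun j _ => ?_
      by_cases h : i = k ∨ j = k
      · simp only [h, if_true]; ring
      · simp only [h, if_false]; ring
    rw [Finset.sum_congr rfl fun i _ => this i]
    simp_rw [← Finset.sum_mul]
    rw [hcomb m k]
  linarith [hs1, hs2]

/-- Theorem 2 (singleton Sobol' index):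
`Var[f^Lo_k] = m(k)²/12 + m(k,·)²/45 + m(k) m(k,·)/12`. -/
theorem sobol_fLo_singleton (n : ℕ) (μ : Finset (Fin n) → ℝ) (hμ : Capacity μ)
    (h2 : ∀ T : Finset (Fin n), 2 < T.card → mobius μ T = 0) (k : Fin n) :
    (∫ t in (0 : ℝ)..1, (anova (fLo (mobius μ)) {k} (fun _ => t)) ^ 2) =
      (mobius μ {k}) ^ 2 / 12 + (∑ i ∈ Finset.univ \ {k}, mobius μ {k, i}) ^ 2 / 45 +
        mobius μ {k} * (∑ i ∈ Finset.univ \ {k}, mobius μ {k, i}) / 12 := by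
  set a := mobius μ {k} with ha
  set b := ∑ i ∈ Finset.univ \ {k}, mobius μ {k, i} with hb
  have hcong : Set.EqOn (fun t : ℝ => (anova (fLo (mobius μ)) {k} (fun _ => t)) ^ 2)
      (fun t : ℝ => (a * (t - 1/2) + b * (t - t^2/2 - 1/3)) ^ 2) (Set.uIcc 0 1) := by
    intro t htt
    rw [Set.uIcc_of_le (by norm_num : (0:ℝ) ≤ 1)] at htt
    simp only
    rw [anova_eval (mobius μ) k htt]
  rw [intervalIntegral.integral_congr hcong]
  have hF : ∀ x : ℝ, HasDerivAt (fun u : ℝ =>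
      b^2/4/5 * u^5 + (-(b*(a+b)))/4 * u^4 + (b*(a/2+b/3)+(a+b)^2)/3 * u^3
        + (-(2*(a+b)*(a/2+b/3)))/2 * u^2 + (a/2+b/3)^2 * u)
      ((a * (x - 1/2) + b * (x - x^2/2 - 1/3)) ^ 2) x := by
    intro x
    have h := (((((hasDerivAt_pow 5 x).const_mul (b^2/4/5)).add
      ((hasDerivAt_pow 4 x).const_mul ((-(b*(a+b)))/4))).add
      ((hasDerivAt_pow 3 x).const_mul ((b*(a/2+b/3)+(a+b)^2)/3))).add
      ((hasDerivAt_pow 2 x).const_mul ((-(2*(a+b)*(a/2+b/3)))/2))).add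
      ((hasDerivAt_id x).const_mul ((a/2+b/3)^2))
    refine h.congr_deriv ?_
    push_cast
    ring
  rw [intervalIntegral.integral_eq_sub_of_hasDerivAt (fun x _ => hF x)
    (Continuous.intervalIntegrable (by fun_prop) _ _)]
  norm_num
  ring
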